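/- In the abstract id-assignment process without an upper bound on ids (Theorem 3 analogue): a multiset of n ≥ 2 natural numbers, all initially 0, evolves by selecting two equal elements v and replacing one by v + 1. At any reachable state in which the multiset consists of n distinct values, those values are exactly {0, 1, ..., n-1}, and the last step producing this state incremented an element of value n - 2. -/
import Mathlib


/-- One step of the unbounded id-assignment process at value `v`. -/
def IdStepAt (v : ℕ) (M M' : Multiset ℕ) : Prop :=
  2 ≤ M.count v ∧ M' = (v + 1) ::ₘ M.erase v

def IdStep (M M' : Multiset ℕ) : Prop := ∃ v, IdStepAt v M M'

/-- Invariant: `0` is present and the support is downward closed. -/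
def IdInv (M : Multiset ℕ) : Prop := 0 ∈ M ∧ ∀ w, w + 1 ∈ M → w ∈ M

lemma idInv_step {M M' : Multiset ℕ} (h : IdStep M M') (hI : IdInv M) : IdInv M' := by
  obtain ⟨v, hc, rfl⟩ := h
  obtain ⟨h0, hd⟩ := hI
  have hvmem : v ∈ M.erase v := by
    rw [← Multiset.count_pos, Multiset.count_erase_self]; omega
  constructor
  · rcases Nat.eq_zero_or_pos v with rfl | hv
    · exact Multiset.mem_cons_of_mem hvmem
    · have : (0 : ℕ) ∈ M.erase v := (Multiset.mem_erase_of_ne (by omega)).2 h0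
      exact Multiset.mem_cons_of_mem this
  · intro w hw
    rcases Multiset.mem_cons.1 hw with h | h
    · have : w = v := by omega
      subst this; exact Multiset.mem_cons_of_mem hvmem
    · have hwM : w ∈ M := hd w (Multiset.mem_of_mem_erase h)
      by_cases hwv : w = v
      · subst hwv; exact Multiset.mem_cons_of_mem hvmem
      · exact Multiset.mem_cons_of_mem ((Multiset.mem_erase_of_ne hwv).2 hwM)

lemma card_step {M M' : Multiset ℕ} (h : IdStep M M') :
    Multiset.card M' = Multiset.card M := by
  obtain ⟨v, hc, rfl⟩ := h
  have hv : v ∈ M := Multiset.count_pos.1 (by omega)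
  rw [Multiset.card_cons, Multiset.card_erase_of_mem hv, Nat.pred_eq_sub_one]
  have : 1 ≤ Multiset.card M := Multiset.card_pos.2 (by rintro rfl; simp at hv)
  omega

lemma reach_inv {n : ℕ} (hn : 1 ≤ n) {M : Multiset ℕ}
    (hreach : Relation.ReflTransGen IdStep (Multiset.replicate n 0) M) :
    IdInv M ∧ Multiset.card M = n := by
  induction hreach with
  | refl =>
    refine ⟨⟨?_, ?_⟩, by simp⟩
    · rw [Multiset.mem_replicate]; omega
    · intro w hw; rw [Multiset.mem_replicate] at hw; omega
  | tail _ h2 ih => exact ⟨idInv_step h2 ih.1, (card_step h2).trans ih.2⟩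

lemma nodup_inv_eq_range {n : ℕ} {M : Multiset ℕ} (hn : 1 ≤ n) (hc : Multiset.card M = n)
    (hI : IdInv M) (hnd : M.Nodup) : M = Multiset.range n := by
  have hdown : ∀ a, a ∈ M → ∀ b, b ≤ a → b ∈ M := by
    intro a
    induction a with
    | zero => intro ha b hb; simpa [Nat.le_zero.1 hb] using ha
    | succ k ih =>
      intro ha b hb
      rcases Nat.lt_or_ge b (k + 1) with h | h
      · exact ih (hI.2 k ha) b (by omega)
      · have : b = k + 1 := by omega
        subst this; exact ha
  have hbig : ∃ a ∈ M, n - 1 ≤ a := by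
    by_contra h
    push_neg at h
    have hsub : M ⊆ Multiset.range (n - 1) := fun a ha =>
      Multiset.mem_range.2 (h a ha)
    have hle : M ≤ Multiset.range (n - 1) := (Multiset.le_iff_subset hnd).2 hsub
    have := Multiset.card_le_card hle
    rw [Multiset.card_range, hc] at this
    omega
  obtain ⟨a, haM, ha⟩ := hbig
  have hsub : Multiset.range n ≤ M := by
    refine (Multiset.le_iff_subset (Multiset.nodup_range n)).2 ?_
    intro b hb
    exact hdown a haM b (by have := Multiset.mem_range.1 hb; omega)
  exact (Multiset.eq_of_le_of_card_le hsub (by rw [hc, Multiset.card_range])).symm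

theorem distinct_ids_iff_range (n : ℕ) (hn : 2 ≤ n) (Mprev M : Multiset ℕ) (v : ℕ)
    (hreach : Relation.ReflTransGen IdStep (Multiset.replicate n 0) Mprev)
    (hstep : IdStepAt v Mprev M)
    (hnodup : M.Nodup) :
    M = Multiset.range n ∧ v = n - 2 := by
  obtain ⟨hIprev, hcprev⟩ := reach_inv (by omega) hreach
  have hstep' : IdStep Mprev M := ⟨v, hstep⟩
  obtain ⟨hc, hM⟩ := hstep
  have hIM : IdInv M := idInv_step hstep' hIprev
  have hcM : Multiset.card M = n := (card_step hstep').trans hcprev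
  have hMrange : M = Multiset.range n := nodup_inv_eq_range (by omega) hcM hIM hnodup
  refine ⟨hMrange, ?_⟩
  -- v + 1 ∈ M, so v + 1 < n
  have hv1M : v + 1 ∈ M := by rw [hM]; exact Multiset.mem_cons_self _ _
  have hv1n : v + 1 < n := by
    rw [hMrange] at hv1M; exact Multiset.mem_range.1 hv1M
  -- v + 1 ∉ Mprev
  have hcount1 : Multiset.count (v + 1) M = 1 := by
    rw [hMrange, Multiset.count_eq_one_of_mem (Multiset.nodup_range n)]
    rw [← hMrange]; exact hv1M
  have hnotprev : v + 1 ∉ Mprev := by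
    intro hmem
    have : Multiset.count (v + 1) Mprev ≥ 1 := Multiset.one_le_count_iff_mem.2 hmem
    have hco : Multiset.count (v + 1) M = Multiset.count (v + 1) Mprev + 1 := by
      rw [hM, Multiset.count_cons_self, Multiset.count_erase_of_ne (by omega)]
    omega
  -- suppose v + 2 < n; then v + 2 ∈ M, hence v + 2 ∈ Mprev, hence v + 1 ∈ Mprev
  by_contra hne
  have hv2n : v + 2 < n := by omega
  have hv2M : v + 2 ∈ M := by rw [hMrange]; exact Multiset.mem_range.2 hv2n
  have hv2prev : v + 2 ∈ Mprev := by
    rw [hM] at hv2M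
    rcases Multiset.mem_cons.1 hv2M with h | h
    · omega
    · exact Multiset.mem_of_mem_erase h
  exact hnotprev (hIprev.2 (v + 1) hv2prev)
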